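/- Let v : Fin k → ℝ with v i ≠ 0 for all i, and let leaves ℓ of a full binary tree over internal nodes Fin k have DTSemNet output values val(ℓ) = ∑_{i ∉ path(ℓ)} (ReLU(v i) + ReLU(-v i)) + ∑_{i ∈ path(ℓ)} ReLU(ε_ℓ(i) · v i), where ε_ℓ(i) = +1 if ℓ is a right descendant of i and −1 if a left descendant. Then the unique leaf ℓ⋆ whose required signs all agree with the signs of v satisfies val(ℓ⋆) > val(ℓ') for every other leaf ℓ'. Consequently argmax over leaves of val equals the leaf selected by the hard decision tree. -/

import Mathlib

noncomputable def ReLU (x : ℝ) : ℝ := max x 0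

lemma relu_add_relu_neg (x : ℝ) : ReLU x + ReLU (-x) = |x| := by
  unfold ReLU
  rcases le_total 0 x with h | h
  · rw [max_eq_left h, max_eq_right (neg_nonpos.mpr h), abs_of_nonneg h]; ring
  · rw [max_eq_right h, max_eq_left (neg_nonneg.mpr h), abs_of_nonpos h]; ring

lemma relu_le_abs (x : ℝ) : ReLU x ≤ |x| :=
  max_le (le_abs_self x) (abs_nonneg x)

open Finset in
/-- Theorem 1 (semantic equivalence): the unique leaf all of whose required
signs agree with the signs of `v` has a strictly larger DTSemNet output value
than every other leaf; hence the argmax over leaves equals the leaf selected by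
the hard decision tree. -/
theorem dtsemnet_equiv (k : ℕ) (L : Type) [Fintype L]
    (v : Fin k → ℝ) (hv : ∀ i, v i ≠ 0)
    (path : L → Finset (Fin k)) (ε : L → Fin k → ℝ)
    (hε : ∀ ℓ i, ε ℓ i = 1 ∨ ε ℓ i = -1)
    (val : L → ℝ)
    (hval : ∀ ℓ, val ℓ = (∑ i ∈ (path ℓ)ᶜ, (ReLU (v i) + ReLU (-v i)))
      + ∑ i ∈ path ℓ, ReLU (ε ℓ i * v i))
    (ℓs : L) (hstar : ∀ i ∈ path ℓs, 0 < ε ℓs i * v i)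
    (huniq : ∀ ℓ, ℓ ≠ ℓs → ¬ (∀ i ∈ path ℓ, 0 < ε ℓ i * v i)) :
    ∀ ℓ, ℓ ≠ ℓs → val ℓ < val ℓs := by
  have habs : ∀ ℓ i, |ε ℓ i * v i| = |v i| := by
    intro ℓ i
    rcases hε ℓ i with h | h <;> simp [h, abs_mul]
  -- val ℓs equals the full sum of |v i|
  have hstar_val : val ℓs = ∑ i : Fin k, |v i| := by
    rw [hval]
    have h1 : ∀ i ∈ (path ℓs)ᶜ, ReLU (v i) + ReLU (-v i) = |v i| := by
      intro i _; exact relu_add_relu_neg (v i)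
    have h2 : ∀ i ∈ path ℓs, ReLU (ε ℓs i * v i) = |v i| := by
      intro i hi
      have h := hstar i hi
      rw [ReLU, max_eq_left h.le, ← habs ℓs i, abs_of_pos h]
    rw [Finset.sum_congr rfl h1, Finset.sum_congr rfl h2,
      Finset.sum_compl_add_sum]
  intro ℓ hℓ
  obtain ⟨i0, hi0, hneg⟩ := by
    have := huniq ℓ hℓ
    push_neg at this
    exact this
  have hlt : ∑ i ∈ path ℓ, ReLU (ε ℓ i * v i) < ∑ i ∈ path ℓ, |v i| := by
    apply Finset.sum_lt_sum (fun i _ => (habs ℓ i ▸ relu_le_abs _))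
    refine ⟨i0, hi0, ?_⟩
    have hne : ε ℓ i0 * v i0 ≠ 0 := by
      rcases hε ℓ i0 with h | h <;> simp [h, hv i0]
    have hneg' : ε ℓ i0 * v i0 < 0 := lt_of_le_of_ne hneg hne
    have : ReLU (ε ℓ i0 * v i0) = 0 := max_eq_right hneg'.le
    rw [this]
    have : (0:ℝ) < |v i0| := abs_pos.mpr (hv i0)
    linarith
  calc val ℓ = (∑ i ∈ (path ℓ)ᶜ, (ReLU (v i) + ReLU (-v i)))
      + ∑ i ∈ path ℓ, ReLU (ε ℓ i * v i) := hval ℓ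
    _ < (∑ i ∈ (path ℓ)ᶜ, |v i|) + ∑ i ∈ path ℓ, |v i| := by
        rw [Finset.sum_congr rfl (fun i _ => relu_add_relu_neg (v i))]
        exact (add_lt_add_iff_left _).mpr hlt
    _ = ∑ i : Fin k, |v i| := Finset.sum_compl_add_sum _ _
    _ = val ℓs := hstar_val.symm
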